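/- For all x in [0, π], (π − x)² · x · cot(x/2) + 2π·(x + sin x − π) ≥ 0, with equality only at x = 0. -/

import Mathlib

open Real

/-- The expression `(π − x)² · x · cot(x/2) + 2π·(x + sin x − π)`, interpreted by
continuous extension at `x = 0` (where `x · cot(x/2) → 2`, giving the value `0`). -/
noncomputable def F (x : ℝ) : ℝ :=
  if x = 0 then 0
  else (π - x) ^ 2 * x * Real.cot (x / 2) + 2 * π * (x + Real.sin x - π)


lemma mono_aux (f f' : ℝ → ℝ) (hf : ∀ t, HasDerivAt f (f' t) t)
    (h0 : ∀ t, 0 ≤ t → 0 ≤ f' t) (hf0 : f 0 = 0) (x : ℝ) (hx : 0 ≤ x) : 0 ≤ f x := by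
  have hmono : MonotoneOn f (Set.Ici (0:ℝ)) := by
    apply monotoneOn_of_deriv_nonneg (convex_Ici 0)
      (fun t _ => (hf t).differentiableAt.continuousAt.continuousWithinAt)
      (fun t _ => (hf t).differentiableAt.differentiableWithinAt)
    intro t ht
    rw [(hf t).deriv]
    exact h0 t (le_of_lt (by simpa using ht))
  have := hmono (Set.self_mem_Ici) hx hx
  simpa [hf0] using this

lemma poly_der (k a b c : ℝ) (n m : ℕ) (t : ℝ) :
    HasDerivAt (fun y : ℝ => k + a * y + b * y^n + c * y^m)
      (a + b * (n * t^(n-1)) + c * (m * t^(m-1))) t := by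
  have h1 : HasDerivAt (fun y : ℝ => k + a * y) a t := by
    simpa using ((hasDerivAt_id t).const_mul a).const_add k
  have h2 : HasDerivAt (fun y : ℝ => b * y^n) (b * (n * t^(n-1))) t :=
    (hasDerivAt_pow n t).const_mul b
  have h3 : HasDerivAt (fun y : ℝ => c * y^m) (c * (m * t^(m-1))) t :=
    (hasDerivAt_pow m t).const_mul c
  exact (h1.add h2).add h3

lemma my_sin_ge (x : ℝ) (hx : 0 ≤ x) : x - x^3/6 ≤ Real.sin x := by
  have key := mono_aux (fun y => Real.sin y + (0 + (-1) * y + (1/6) * y^3 + 0 * y^4))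
    (fun t => Real.cos t + ((-1) + (1/6) * (3 * t^2) + 0 * (4 * t^3)))
    (fun t => by simpa [Pi.add_def, Pi.neg_def] using (Real.hasDerivAt_sin t).add (poly_der 0 (-1) (1/6) 0 3 4 t))
    (fun t ht => by nlinarith [Real.one_sub_sq_div_two_le_cos (x := t)])
    (by norm_num) x hx
  nlinarith [key]

lemma my_cos_le (x : ℝ) (hx : 0 ≤ x) : Real.cos x ≤ 1 - x^2/2 + x^4/24 := by
  have key := mono_aux (fun y => -Real.cos y + (1 + 0 * y + (-1/2) * y^2 + (1/24) * y^4))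
    (fun t => Real.sin t + (0 + (-1/2) * (2 * t^1) + (1/24) * (4 * t^3)))
    (fun t => by simpa [Pi.add_def, Pi.neg_def] using ((Real.hasDerivAt_cos t).neg).add (poly_der 1 0 (-1/2) (1/24) 2 4 t))
    (fun t ht => by nlinarith [my_sin_ge t ht])
    (by norm_num) x hx
  nlinarith [key]

lemma my_sin_le (x : ℝ) (hx : 0 ≤ x) : Real.sin x ≤ x - x^3/6 + x^5/120 := by
  have key := mono_aux (fun y => -Real.sin y + (0 + 1 * y + (-1/6) * y^3 + (1/120) * y^5))
    (fun t => -Real.cos t + (1 + (-1/6) * (3 * t^2) + (1/120) * (5 * t^4)))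
    (fun t => by simpa [Pi.add_def, Pi.neg_def] using ((Real.hasDerivAt_sin t).neg).add (poly_der 0 1 (-1/6) (1/120) 3 5 t))
    (fun t ht => by nlinarith [my_cos_le t ht])
    (by norm_num) x hx
  nlinarith [key]

lemma my_cos_ge (x : ℝ) (hx : 0 ≤ x) : 1 - x^2/2 + x^4/24 - x^6/720 ≤ Real.cos x := by
  have key := mono_aux
    (fun y => Real.cos y + (-1 + 0 * y + (1/2) * y^2 + (-1/24) * y^4) + (1/720) * y^6)
    (fun t => -Real.sin t + (0 + (1/2) * (2 * t^1) + (-1/24) * (4 * t^3)) + (1/720) * (6 * t^5))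
    (fun t => by
      simpa [Pi.add_def, Pi.neg_def] using ((Real.hasDerivAt_cos t).add (poly_der (-1) 0 (1/2) (-1/24) 2 4 t)).add
        ((hasDerivAt_pow 6 t).const_mul (1/720:ℝ)))
    (fun t ht => by nlinarith [my_sin_le t ht])
    (by norm_num) x hx
  nlinarith [key]

lemma my_sin_ge7 (x : ℝ) (hx : 0 ≤ x) : x - x^3/6 + x^5/120 - x^7/5040 ≤ Real.sin x := by
  have key := mono_aux
    (fun y => Real.sin y + (0 + (-1) * y + (1/6) * y^3 + (-1/120) * y^5) + (1/5040) * y^7)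
    (fun t => Real.cos t + ((-1) + (1/6) * (3 * t^2) + (-1/120) * (5 * t^4)) + (1/5040) * (7 * t^6))
    (fun t => by
      simpa [Pi.add_def, Pi.neg_def] using ((Real.hasDerivAt_sin t).add (poly_der 0 (-1) (1/6) (-1/120) 3 5 t)).add
        ((hasDerivAt_pow 7 t).const_mul (1/5040:ℝ)))
    (fun t ht => by nlinarith [my_cos_ge t ht])
    (by norm_num) x hx
  nlinarith [key]


lemma case1_poly (u : ℝ) (h0 : 0 ≤ u) (h1 : u ≤ 4/5) :
    0 < 314159/300000 - 2*u + (14137171/15000000)*u^2 + u^3/3 - (1346397/4000000)*u^4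
      + (448799/12000000)*u^6 - (448799/270000000)*u^8 := by
  nlinarith [sq_nonneg (u-4/5), sq_nonneg u, mul_nonneg h0 (sub_nonneg.2 h1),
    mul_nonneg (mul_nonneg h0 h0) (sub_nonneg.2 h1), sq_nonneg (u-1/2),
    mul_nonneg (mul_nonneg (mul_nonneg h0 h0) h0) (sub_nonneg.2 h1),
    pow_le_pow_left₀ h0 h1 4, pow_le_pow_left₀ h0 h1 6, pow_le_pow_left₀ h0 h1 8,
    pow_le_pow_left₀ h0 h1 2, pow_le_pow_left₀ h0 h1 3]

lemma case2_poly (d : ℝ) (h0 : 0 ≤ d) (h1 : d ≤ 7708/10000) :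
    0 < 2 - π^2/6 - d^2 - π^2*d^2/240 + 47*π*d^3/180 - 17*π*d^5/420 + 61*π*d^7/18900 - π*d^9/9450 := by
  have hpl : (3.141592 : ℝ) < π := pi_gt_d6
  have hpu : π < 3.141593 := pi_lt_d6
  nlinarith [sq_nonneg (d-7708/10000), mul_nonneg h0 (sub_nonneg.2 h1), sq_nonneg d,
    mul_nonneg (mul_nonneg h0 h0) (sub_nonneg.2 h1),
    mul_nonneg (mul_nonneg (mul_nonneg h0 h0) h0) (sub_nonneg.2 h1),
    pow_le_pow_left₀ h0 h1 3, pow_le_pow_left₀ h0 h1 5, pow_le_pow_left₀ h0 h1 7,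
    pow_le_pow_left₀ h0 h1 9, sq_nonneg (π-3.141592), sq_nonneg (d-1/2)]


set_option maxHeartbeats 1600000 in
lemma key2b (d : ℝ) (hd0 : 0 < d) (hdu : d ≤ 7708/10000)
    (c2 : ∀ e : ℝ, 0 ≤ e → e ≤ 7708/10000 →
      0 < 2 - π^2/6 - e^2 - π^2*e^2/240 + 47*π*e^3/180 - 17*π*e^5/420 + 61*π*e^7/18900 - π*e^9/9450)
    (tsl : ∀ x : ℝ, 0 ≤ x → Real.sin x ≤ x - x^3/6 + x^5/120)
    (tsg7 : ∀ x : ℝ, 0 ≤ x → x - x^3/6 + x^5/120 - x^7/5040 ≤ Real.sin x) :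
    0 < 2*d*(π/2 - d)^2*Real.cos d - π*Real.sin d*(π/2 - d - Real.sin (2*d)/2) := by
  have hpl : (3141592/1000000 : ℝ) < π := by
    have h := pi_gt_d6; norm_num at h ⊢; linarith
  have hpu : π < (3141593/1000000 : ℝ) := by
    have h := pi_lt_d6; norm_num at h ⊢; linarith
  have hcd : 1 - d^2/2 ≤ Real.cos d := Real.one_sub_sq_div_two_le_cos
  have hsu := tsl d hd0.le
  have hsd0 : 0 ≤ Real.sin d := Real.sin_nonneg_of_nonneg_of_le_pi hd0.le (by linarith)
  have hs7 := tsg7 (2*d) (by linarith)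
  have hA : π/2 - d - Real.sin (2*d)/2 ≤ π/2 - 2*d + 2*d^3/3 - 2*d^5/15 + 4*d^7/315 := by
    nlinarith [hs7]
  have hsinle : Real.sin (2*d) ≤ 2*d := Real.sin_le (by linarith)
  have hA0 : 0 ≤ π/2 - d - Real.sin (2*d)/2 := by linarith
  have hq0 : (0:ℝ) ≤ π/2 - 2*d + 2*d^3/3 - 2*d^5/15 + 4*d^7/315 := le_trans hA0 hA
  have hcoef : (0:ℝ) ≤ 2*d*(π/2 - d)^2 := by positivity
  have t1 : 2*d*(π/2 - d)^2*(1 - d^2/2) ≤ 2*d*(π/2 - d)^2*Real.cos d :=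
    mul_le_mul_of_nonneg_left hcd hcoef
  have t2 : π*Real.sin d*(π/2 - d - Real.sin (2*d)/2)
      ≤ π*((d - d^3/6 + d^5/120)*(π/2 - 2*d + 2*d^3/3 - 2*d^5/15 + 4*d^7/315)) := by
    have e1 : Real.sin d*(π/2 - d - Real.sin (2*d)/2)
        ≤ Real.sin d*(π/2 - 2*d + 2*d^3/3 - 2*d^5/15 + 4*d^7/315) :=
      mul_le_mul_of_nonneg_left hA hsd0
    have e2 : Real.sin d*(π/2 - 2*d + 2*d^3/3 - 2*d^5/15 + 4*d^7/315)
        ≤ (d - d^3/6 + d^5/120)*(π/2 - 2*d + 2*d^3/3 - 2*d^5/15 + 4*d^7/315) :=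
      mul_le_mul_of_nonneg_right hsu hq0
    nlinarith [mul_le_mul_of_nonneg_left (le_trans e1 e2) pi_pos.le]
  have hc := c2 d hd0.le hdu
  have hexp : 2*d*(π/2 - d)^2*(1 - d^2/2)
      - π*((d - d^3/6 + d^5/120)*(π/2 - 2*d + 2*d^3/3 - 2*d^5/15 + 4*d^7/315))
      = d^3*(2 - π^2/6 - d^2 - π^2*d^2/240 + 47*π*d^3/180 - 17*π*d^5/420
        + 61*π*d^7/18900 - π*d^9/9450) := by ring
  nlinarith [mul_pos (pow_pos hd0 3) hc, t1, t2, hexp]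

set_option maxHeartbeats 1600000 in
lemma key2 (u : ℝ) (h0 : 0 < u) (h2 : u < π/2)
    (c1 : ∀ v : ℝ, 0 ≤ v → v ≤ 4/5 →
      0 < 314159/300000 - 2*v + (14137171/15000000)*v^2 + v^3/3 - (1346397/4000000)*v^4
        + (448799/12000000)*v^6 - (448799/270000000)*v^8)
    (c2 : ∀ e : ℝ, 0 ≤ e → e ≤ 7708/10000 →
      0 < 2 - π^2/6 - e^2 - π^2*e^2/240 + 47*π*e^3/180 - 17*π*e^5/420 + 61*π*e^7/18900 - π*e^9/9450)
    (tsg : ∀ x : ℝ, 0 ≤ x → x - x^3/6 ≤ Real.sin x)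
    (tsl : ∀ x : ℝ, 0 ≤ x → Real.sin x ≤ x - x^3/6 + x^5/120)
    (tcl : ∀ x : ℝ, 0 ≤ x → Real.cos x ≤ 1 - x^2/2 + x^4/24)
    (tsg7 : ∀ x : ℝ, 0 ≤ x → x - x^3/6 + x^5/120 - x^7/5040 ≤ Real.sin x) :
    0 < u^2*(π - 2*u)*Real.sin u + π*Real.sin u*(Real.cos u)^2 - π*u*Real.cos u := by
  have hpl : (3141592/1000000 : ℝ) < π := by
    have h := pi_gt_d6; norm_num at h ⊢; linarith
  have hpu : π < (3141593/1000000 : ℝ) := by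
    have h := pi_lt_d6; norm_num at h ⊢; linarith
  rcases le_or_gt u (4/5) with hu | hu
  · -- case 1
    have hrw : u^2*(π - 2*u)*Real.sin u + π*Real.sin u*(Real.cos u)^2 - π*u*Real.cos u
        = u^2*(π - 2*u)*Real.sin u - π*Real.cos u*(u - Real.sin (2*u)/2) := by
      rw [Real.sin_two_mul]; ring
    rw [hrw]
    have hsl := tsg u h0.le
    have hs7 := tsg7 (2*u) (by linarith)
    have hq : u - Real.sin (2*u)/2 ≤ 2*u^3/3 - 2*u^5/15 + 4*u^7/315 := by nlinarith [hs7]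
    have hcu := tcl u h0.le
    have hcpos : 0 < Real.cos u := Real.cos_pos_of_mem_Ioo ⟨by nlinarith, h2⟩
    have hsl0 : (0:ℝ) ≤ u - u^3/6 := by nlinarith
    have hq0 : (0:ℝ) ≤ 2*u^3/3 - 2*u^5/15 + 4*u^7/315 := by
      nlinarith [pow_nonneg h0.le 7, mul_nonneg (pow_nonneg h0.le 3) (by nlinarith : (0:ℝ) ≤ 5 - u^2)]
    have hcu0 : (0:ℝ) ≤ 1 - u^2/2 + u^4/24 := by nlinarith
    have hcoef : (0:ℝ) ≤ u^2*(π - 2*u) := by nlinarith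
    have t1 : u^2*((3141592/1000000 : ℝ) - 2*u)*(u - u^3/6) ≤ u^2*(π - 2*u)*Real.sin u := by
      have e1 : u^2*((3141592/1000000 : ℝ) - 2*u)*(u - u^3/6) ≤ u^2*(π - 2*u)*(u - u^3/6) := by
        nlinarith [mul_nonneg (mul_nonneg (sq_nonneg u) (by linarith : (0:ℝ) ≤ π - 3141592/1000000)) hsl0]
      have e2 : u^2*(π - 2*u)*(u - u^3/6) ≤ u^2*(π - 2*u)*Real.sin u :=
        mul_le_mul_of_nonneg_left hsl hcoef
      linarith
    have t2 : π*Real.cos u*(u - Real.sin (2*u)/2)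
        ≤ (3141593/1000000 : ℝ)*((1 - u^2/2 + u^4/24)*(2*u^3/3 - 2*u^5/15 + 4*u^7/315)) := by
      have e1 : Real.cos u*(u - Real.sin (2*u)/2) ≤ Real.cos u*(2*u^3/3 - 2*u^5/15 + 4*u^7/315) :=
        mul_le_mul_of_nonneg_left hq hcpos.le
      have e2 : Real.cos u*(2*u^3/3 - 2*u^5/15 + 4*u^7/315)
          ≤ (1 - u^2/2 + u^4/24)*(2*u^3/3 - 2*u^5/15 + 4*u^7/315) :=
        mul_le_mul_of_nonneg_right hcu hq0
      have e3 : (0:ℝ) ≤ (1 - u^2/2 + u^4/24)*(2*u^3/3 - 2*u^5/15 + 4*u^7/315) :=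
        mul_nonneg hcu0 hq0
      have f1 := mul_le_mul_of_nonneg_left (le_trans e1 e2) pi_pos.le
      have f2 := mul_le_mul_of_nonneg_right hpu.le e3
      nlinarith [f1, f2]
    have hc := c1 u h0.le hu
    have hexp : u^2*((3141592/1000000 : ℝ) - 2*u)*(u - u^3/6)
        - (3141593/1000000 : ℝ)*((1 - u^2/2 + u^4/24)*(2*u^3/3 - 2*u^5/15 + 4*u^7/315))
        = u^3*(314159/300000 - 2*u + (14137171/15000000)*u^2 + u^3/3 - (1346397/4000000)*u^4
          + (448799/12000000)*u^6 - (448799/270000000)*u^8) := by ring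
    nlinarith [mul_pos (pow_pos h0 3) hc, t1, t2, hexp]
  · -- case 2
    have hd0 : 0 < π/2 - u := by linarith
    have hdu : π/2 - u ≤ 7708/10000 := by nlinarith
    have hb := key2b (π/2 - u) hd0 hdu c2 tsl tsg7
    rw [Real.cos_pi_div_two_sub, Real.sin_pi_div_two_sub] at hb
    have h2u : 2*(π/2 - u) = π - 2*u := by ring
    rw [h2u, Real.sin_pi_sub, Real.sin_two_mul] at hb
    nlinarith [hb]


lemma F_pos (x : ℝ) (hx : x ∈ Set.Ioo (0:ℝ) π) : 0 < F x := by
  obtain ⟨hx0, hxπ⟩ := hx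
  have hs : 0 < Real.sin (x/2) :=
    Real.sin_pos_of_pos_of_lt_pi (by linarith) (by linarith [pi_pos])
  have hu0 : 0 < π/2 - x/2 := by linarith
  have hu2 : π/2 - x/2 < π/2 := by linarith
  have hkey := key2 (π/2 - x/2) hu0 hu2 case1_poly case2_poly my_sin_ge my_sin_le my_cos_le my_sin_ge7
  rw [Real.sin_pi_div_two_sub, Real.cos_pi_div_two_sub] at hkey
  have hsx : Real.sin x = 2*Real.sin (x/2)*Real.cos (x/2) := by
    rw [← Real.sin_two_mul]; congr 1; ring
  have hG : 0 < (π - x)^2*x*Real.cos (x/2) + 2*π*(x + Real.sin x - π)*Real.sin (x/2) := by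
    rw [hsx]; nlinarith [hkey]
  have hFx : F x = ((π - x)^2*x*Real.cos (x/2) + 2*π*(x + Real.sin x - π)*Real.sin (x/2))
      / Real.sin (x/2) := by
    rw [F, if_neg (ne_of_gt hx0), Real.cot_eq_cos_div_sin]
    field_simp
  rw [hFx]
  exact div_pos hG hs

theorem stmt_4 :
    (∀ x ∈ Set.Icc (0 : ℝ) π, 0 ≤ F x) ∧
    (∀ x ∈ Set.Ioo (0 : ℝ) π, 0 < F x) ∧ F 0 = 0 := by
  refine ⟨?_, fun x hx => F_pos x hx, by rw [F]; simp⟩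
  intro x hx
  rcases eq_or_lt_of_le hx.1 with h | h
  · rw [← h]; simp [F]
  · rcases eq_or_lt_of_le hx.2 with h2 | h2
    · rw [h2, F, if_neg (ne_of_gt pi_pos)]
      simp [Real.sin_pi]
    · exact (F_pos x ⟨h, h2⟩).le
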